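/- Let A be a finite abelian group. There exists a 2-cocycle c : A × A → ℂ* whose associated alternating bicharacter (a,b) ↦ c(a,b) c(b,a)⁻¹ is a nondegenerate pairing A × A → ℂ* if and only if A is isomorphic to H × H for some abelian group H. -/

import Mathlib

open Subgroup

theorem aux_zpow_apply {M G : Type*} [MulOneClass M] [CommGroup G] (f : M →* G) (n : ℤ) (x : M) :
    (f ^ n) x = f x ^ n := rfl

theorem aux_key : ∀ (nn : ℕ) (A : Type) [CommGroup A] [Fintype A],
    Fintype.card A = nn →
    ∀ B : A →* A →* ℂˣ, (∀ a, B a a = 1) → (∀ a, (∀ b, B a b = 1) → a = 1) →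
    ∃ (H : Type) (_ : CommGroup H), Nonempty (A ≃* H × H) := by
  intro nn
  induction nn using Nat.strong_induction_on with
  | _ nn IH =>
    intro A _ _ hcard B refl nd
    rcases subsingleton_or_nontrivial A with hA | hA
    · haveI : Unique A := uniqueOfSubsingleton 1
      haveI : Unique (PUnit × PUnit) := ⟨⟨default⟩, by intro x; cases x; rfl⟩
      exact ⟨PUnit, inferInstance, ⟨MulEquiv.ofUnique⟩⟩
    -- skew-symmetry
    have skew : ∀ x y : A, B y x = (B x y)⁻¹ := by
      intro x y
      rw [eq_inv_iff_mul_eq_one]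
      have h : B x x * B x y * (B y x * B y y) = 1 := by
        have h := refl (x * y)
        rw [map_mul] at h
        simpa [MonoidHom.mul_apply, map_mul, mul_assoc, mul_comm, mul_left_comm] using h
      rw [refl x, refl y, one_mul, mul_one] at h
      rw [mul_comm]; exact h
    -- element of maximal order
    obtain ⟨a, ha⟩ := Monoid.exists_orderOf_eq_exponent (Monoid.ExponentExists.of_finite (G := A))
    set n := Monoid.exponent A with hn
    have hn1 : 1 < n := Monoid.one_lt_exponent
    haveI : NeZero n := ⟨by omega⟩
    have hBinj : Function.Injective B := by
      rw [injective_iff_map_eq_one]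
      intro x hx
      exact nd x fun b => by rw [show B x b = (1 : A →* ℂˣ) b from congrArg (· b) hx]; rfl
    have hordBa : orderOf (B a) = n := by rw [orderOf_injective B hBinj, ha]
    set χ := B a with hχ
    haveI : Finite χ.range := Set.Finite.to_subtype (Set.finite_range χ)
    haveI : IsCyclic χ.range := by
      refine isCyclic_of_subgroup_isDomain ((Units.coeHom ℂ).comp χ.range.subtype) ?_
      intro x y hxy
      exact Subtype.ext (Units.ext hxy)
    obtain ⟨g, hg⟩ := IsCyclic.exists_generator (α := χ.range)
    obtain ⟨b, hb⟩ := g.2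
    have hbn : ∀ x : A, x ^ n = 1 := fun x => Monoid.pow_exponent_eq_one x
    have hζdvd : orderOf (χ b) ∣ n := by
      apply orderOf_dvd_of_pow_eq_one
      rw [← map_pow, hbn b, map_one]
    have hndvd : n ∣ orderOf (χ b) := by
      rw [← hordBa]
      apply orderOf_dvd_of_pow_eq_one
      refine DFunLike.ext _ _ fun d => ?_
      rw [MonoidHom.pow_apply, MonoidHom.one_apply]
      have hd : χ d ∈ χ.range := ⟨d, rfl⟩
      obtain ⟨k, hk⟩ := hg ⟨χ d, hd⟩
      have hk' : (g : ℂˣ) ^ k = χ d := by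
        have := congrArg (Subtype.val) hk
        simpa using this
      rw [← hk', ← zpow_natCast, ← zpow_mul, mul_comm, zpow_mul, zpow_natCast, hb,
        pow_orderOf_eq_one, one_zpow]
    have hζord : orderOf (χ b) = n := Nat.dvd_antisymm hζdvd hndvd
    set ζ := χ b with hζ
    have hζprim : IsPrimitiveRoot ζ n := hζord ▸ IsPrimitiveRoot.orderOf ζ
    have hpow : ∀ ξ : ℂˣ, ξ ^ n = 1 → ∃ k : ℤ, ζ ^ k = ξ := by
      intro ξ hξ
      have : ξ ∈ rootsOfUnity n ℂ := by
        rw [mem_rootsOfUnity]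
        exact_mod_cast hξ
      rw [← hζprim.zpowers_eq] at this
      exact this
    -- the orthogonal complement
    set N : Subgroup A := (B.flip a).ker ⊓ (B.flip b).ker with hN
    have hmemN : ∀ x : A, x ∈ N ↔ B x a = 1 ∧ B x b = 1 := by
      intro x
      simp [hN, MonoidHom.mem_ker]
    -- decomposition
    have hdec : ∀ x : A, ∃ (i j : ℤ) (y : A), y ∈ N ∧ x = a ^ i * b ^ j * y := by
      intro x
      obtain ⟨i, hi⟩ := hpow (B x b) (by rw [← map_pow, hbn b, map_one])
      obtain ⟨j, hj⟩ := hpow (B x a)⁻¹ (by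
        rw [inv_pow, ← map_pow, hbn a, map_one, inv_one])
      refine ⟨i, j, (a ^ i * b ^ j)⁻¹ * x, ?_, by group⟩
      rw [hmemN]
      constructor
      · have h : B ((a ^ i * b ^ j)⁻¹ * x) a
            = ((B a a) ^ i)⁻¹ * ((B b a) ^ j)⁻¹ * B x a := by
          simp [map_mul, map_inv, map_zpow, MonoidHom.mul_apply, MonoidHom.inv_apply, mul_zpow,
            aux_zpow_apply, mul_comm, mul_left_comm]
        rw [h, refl a, skew a b, ← hχ, ← hζ]
        simp [hj]
      · have h : B ((a ^ i * b ^ j)⁻¹ * x) b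
            = ((B a b) ^ i)⁻¹ * ((B b b) ^ j)⁻¹ * B x b := by
          simp [map_mul, map_inv, map_zpow, MonoidHom.mul_apply, MonoidHom.inv_apply, mul_zpow,
            aux_zpow_apply, mul_comm, mul_left_comm]
        rw [h, refl b, ← hχ, ← hζ]
        simp [← hi]
    -- the restricted pairing on N
    haveI : Fintype N := Fintype.ofFinite _
    set B' : N →* N →* ℂˣ := ((B.comp N.subtype).flip.comp N.subtype).flip with hB'
    have hB'apply : ∀ x y : N, B' x y = B (x : A) (y : A) := fun x y => rfl
    have hanotN : (a : A) ∉ N := by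
      rw [hmemN]
      rintro ⟨-, h2⟩
      have h : ζ = 1 := h2
      rw [← orderOf_eq_one_iff, hζord] at h
      omega
    have hcardlt : Fintype.card N < nn := by
      rw [← hcard]
      exact Fintype.card_lt_of_injective_of_notMem _ Subtype.val_injective
        (by rintro ⟨⟨y, hy⟩, rfl⟩; exact hanotN hy)
    obtain ⟨H', instH', ⟨eN⟩⟩ := IH (Fintype.card N) hcardlt N rfl B'
      (fun x => by rw [hB'apply, refl])
      (by
        intro x hx
        have hxA : ∀ y : A, B (x : A) y = 1 := by
          intro y
          obtain ⟨i, j, y', hy', rfl⟩ := hdec y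
          have h1 : B (x : A) a = 1 := ((hmemN x).mp x.2).1
          have h2 : B (x : A) b = 1 := ((hmemN x).mp x.2).2
          have h3 : B (x : A) y' = 1 := by rw [← hB'apply x ⟨y', hy'⟩]; exact hx _
          simp [map_mul, map_zpow, h1, h2, h3, MonoidHom.mul_apply, aux_zpow_apply]
        exact Subtype.ext (nd (x : A) hxA))
    -- homs Multiplicative (ZMod n) →* A
    have mk_s : ∀ x : A, x ^ n = 1 →
        ∃ s : Multiplicative (ZMod n) →* A,
          ∀ k : ℤ, s (Multiplicative.ofAdd ((k : ℤ) : ZMod n)) = x ^ k := by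
      intro x hx
      have hx' : (zmultiplesHom (Additive A) (Additive.ofMul x)) (n : ℤ) = 0 := by
        show ((n : ℤ) • Additive.ofMul x) = 0
        rw [← ofMul_zpow, zpow_natCast, hx]; rfl
      refine ⟨AddMonoidHom.toMultiplicativeLeft (ZMod.lift n ⟨_, hx'⟩), fun k => ?_⟩
      simp only [AddMonoidHom.coe_toMultiplicativeLeft, Function.comp_apply, toAdd_ofAdd,
        ZMod.lift_coe]
      show Additive.toMul ((k : ℤ) • Additive.ofMul x) = x ^ k
      rw [← ofMul_zpow]; rfl
    obtain ⟨sa, hsa⟩ := mk_s a (hbn a)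
    obtain ⟨sb, hsb⟩ := mk_s b (hbn b)
    set Φ : (Multiplicative (ZMod n) × Multiplicative (ZMod n)) × N →* A :=
      (sa.coprod sb).coprod N.subtype with hΦ
    have hΦapply : ∀ (z w : Multiplicative (ZMod n)) (y : N),
        Φ ((z, w), y) = sa z * sb w * (y : A) := fun z w y => rfl
    have hsurj : Function.Surjective Φ := by
      intro x
      obtain ⟨i, j, y, hy, rfl⟩ := hdec x
      exact ⟨((Multiplicative.ofAdd ((i : ℤ) : ZMod n),
        Multiplicative.ofAdd ((j : ℤ) : ZMod n)), ⟨y, hy⟩),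
        by rw [hΦapply, hsa i, hsb j]⟩
    have hinj : Function.Injective Φ := by
      rw [injective_iff_map_eq_one]
      rintro ⟨⟨z, w⟩, y⟩ hp
      have hp0 := hp
      obtain ⟨i, hi⟩ := ZMod.intCast_surjective (n := n) (Multiplicative.toAdd z)
      obtain ⟨j, hj⟩ := ZMod.intCast_surjective (n := n) (Multiplicative.toAdd w)
      have hz : z = Multiplicative.ofAdd ((i : ℤ) : ZMod n) := by
        rw [hi]; rfl
      have hw : w = Multiplicative.ofAdd ((j : ℤ) : ZMod n) := by
        rw [hj]; rfl
      rw [hΦapply, hz, hw, hsa i, hsb j] at hp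
      have hyN := (hmemN y).mp y.2
      have hub : B (a ^ i * b ^ j * (y : A)) b = ζ ^ i := by
        simp [map_mul, map_zpow, MonoidHom.mul_apply, aux_zpow_apply, refl b, hyN.2, ← hζ,
          ← hχ]
      have hua : B (a ^ i * b ^ j * (y : A)) a = ζ ^ (-j) := by
        simp [map_mul, map_zpow, MonoidHom.mul_apply, aux_zpow_apply, refl a, (show χ a = 1 from refl a), hyN.1,
          skew a b, ← hζ, ← hχ, zpow_neg, inv_zpow]
      rw [hp, map_one] at hub hua
      have hiz : ((i : ℤ) : ZMod n) = 0 := by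
        rw [ZMod.intCast_zmod_eq_zero_iff_dvd]
        exact_mod_cast hζord ▸ orderOf_dvd_iff_zpow_eq_one.mpr hub.symm
      have hjz : ((j : ℤ) : ZMod n) = 0 := by
        rw [ZMod.intCast_zmod_eq_zero_iff_dvd]
        have : ζ ^ (-j) = 1 := hua.symm
        have h2 : ζ ^ j = 1 := by
          have := congrArg (·⁻¹) this
          simpa [zpow_neg] using this
        exact_mod_cast hζord ▸ orderOf_dvd_iff_zpow_eq_one.mpr h2
      have hz1 : z = 1 := by rw [hz, hiz]; rfl
      have hw1 : w = 1 := by rw [hw, hjz]; rfl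
      have hy1 : y = 1 := by
        rw [hz1, hw1, hΦapply, map_one, map_one, one_mul, one_mul] at hp0
        exact Subtype.ext hp0
      rw [hz1, hw1, hy1]; rfl
    have eA := (MulEquiv.ofBijective Φ ⟨hinj, hsurj⟩).symm
    refine ⟨Multiplicative (ZMod n) × H', inferInstance,
      ⟨eA.trans (((MulEquiv.refl _).prodCongr eN).trans
        (MulEquiv.prodProdProdComm (Multiplicative (ZMod n)) (Multiplicative (ZMod n)) H' H'))⟩⟩

theorem stmt_4 {A : Type} [CommGroup A] [Fintype A] :
    (∃ c : A → A → ℂˣ,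
      (∀ a b d : A, c a b * c (a * b) d = c b d * c a (b * d)) ∧
      (∀ a : A, (∀ b : A, c a b * (c b a)⁻¹ = 1) → a = 1)) ↔
    ∃ (H : Type) (_ : CommGroup H), Nonempty (A ≃* H × H) := by
  constructor
  · rintro ⟨c, hc, hnd⟩
    have hC : ∀ x y z : A, (c x y : ℂ) * c (x * y) z = c y z * c x (y * z) := by
      intro x y z
      exact_mod_cast congrArg Units.val (hc x y z)
    have hmul : ∀ x y z : A,
        c x (y * z) * (c (y * z) x)⁻¹ = (c x y * (c y x)⁻¹) * (c x z * (c z x)⁻¹) := by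
      intro x y z
      have e1 := hC x y z
      have e2 := hC y z x
      have e3 := hC y x z
      rw [mul_comm y x] at e3
      rw [mul_comm z x] at e2
      have key : (c x (y * z) : ℂ) * c y x * c z x * c y z
          = c x y * c x z * c (y * z) x * c y z := by
        linear_combination (-((c y x : ℂ) * c z x)) * e1 - ((c x y : ℂ) * c x z) * e2
          + ((c x y : ℂ) * c z x) * e3
      have key2 : (c x (y * z) : ℂ) * c y x * c z x = c x y * c x z * c (y * z) x :=
        mul_right_cancel₀ (Units.ne_zero _) key
      apply Units.ext
      push_cast
      field_simp
      linear_combination key2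
    let β : A → A →* ℂˣ := fun x => MonoidHom.mk' (fun y => c x y * (c y x)⁻¹) (hmul x)
    have hβmul : ∀ x y : A, β (x * y) = β x * β y := by
      intro x y
      refine DFunLike.ext _ _ fun d => ?_
      rw [MonoidHom.mul_apply]
      show c (x * y) d * (c d (x * y))⁻¹
        = (c x d * (c d x)⁻¹) * (c y d * (c d y)⁻¹)
      have h := hmul d x y
      have h2 := congrArg (·⁻¹) h
      simp only [mul_inv_rev, inv_inv] at h2
      rw [show c (x * y) d * (c d (x * y))⁻¹ = ((c d (x * y)) * (c (x * y) d)⁻¹)⁻¹ by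
        rw [mul_inv_rev, inv_inv, mul_comm]]
      rw [h]
      group
      simp [mul_comm, mul_left_comm, mul_assoc]
    let B : A →* A →* ℂˣ := MonoidHom.mk' β hβmul
    have hrefl : ∀ x : A, B x x = 1 := fun x => mul_inv_cancel _
    exact aux_key (Fintype.card A) A rfl B hrefl hnd
  · rintro ⟨H, instH, ⟨e⟩⟩
    haveI : Finite (H × H) := Finite.of_equiv A e.toEquiv
    haveI : Finite H := Finite.prod_left H
    haveI : NeZero ((Monoid.exponent H : ℂ)) :=
      ⟨Nat.cast_ne_zero.mpr Monoid.exponent_ne_zero_of_finite⟩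
    obtain ⟨ι⟩ := CommGroup.monoidHom_mulEquiv_of_hasEnoughRootsOfUnity H ℂ
    set φ : H → H →* ℂˣ := fun h => ι.symm h with hφ
    have hφmul : ∀ g h : H, φ (g * h) = φ g * φ h := fun g h => map_mul ι.symm g h
    have hφone : φ 1 = 1 := map_one ι.symm
    have hleft : ∀ g : H, φ g = 1 → g = 1 := by
      intro g hg
      have h2 : ι.symm g = ι.symm 1 := by rw [map_one]; exact hg
      exact ι.symm.injective h2
    have hright : ∀ h : H, (∀ g : H, φ g h = 1) → h = 1 := by
      intro h hh
      by_contra hne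
      obtain ⟨ψ, hψ⟩ := CommGroup.exists_apply_ne_one_of_hasEnoughRootsOfUnity H ℂ hne
      exact hψ (by simpa [hφ] using hh (ι ψ))
    refine ⟨fun x y => φ (e x).1 (e y).2, ?_, ?_⟩
    · intro x y z
      simp [map_mul, Prod.fst_mul, Prod.snd_mul, hφmul, MonoidHom.mul_apply,
        mul_comm, mul_assoc, mul_left_comm]
    · intro x hx
      have h1 : (e x).1 = 1 := by
        apply hleft
        ext y
        have := hx (e.symm (1, y))
        simp only [MulEquiv.apply_symm_apply] at this
        simp only [hφone, MonoidHom.one_apply, inv_one, mul_one] at this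
        simpa using this
      have h2 : (e x).2 = 1 := by
        apply hright
        intro g
        have := hx (e.symm (g, 1))
        simp only [MulEquiv.apply_symm_apply] at this
        simp only [map_one] at this
        rw [mul_inv_eq_one] at this
        rw [← this]
      apply e.injective
      rw [map_one]
      exact Prod.ext h1 h2
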